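/- Let n ≥ 4 and let x : Fin n → ℝ be nonzero with x_1 ≤ ⋯ ≤ x_n, x_n = 0, and x_i + x_j ≤ 0 for all 1 ≤ i < j ≤ n. Let s be the smallest index with x_s = 0. Then 2 ≤ s ≤ n and #{(i,j) : 1 ≤ i < j ≤ n, x_i + x_j < 0} = (s−1)(2n − s)/2. -/

import Mathlib

lemma stmt7_aux (n : ℕ) : ∀ m, m < n → 2 * ∑ i ∈ Finset.Icc 1 m, (n - i) = m * (2*n - m - 1) := by
  intro m
  induction m with
  | zero => simp
  | succ k ih =>
    intro h
    rw [Finset.sum_Icc_succ_top (by omega)]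
    have ih' := ih (by omega)
    have h1 : k + 1 ≤ n := by omega
    zify [h1, show k ≤ 2*n by omega, show 1 ≤ 2*n - k by omega,
      show k + 1 ≤ 2*n by omega, show k + 1 + 1 ≤ 2*n by omega,
      Nat.sub_sub] at ih' ⊢
    nlinarith [ih']

/-- Type DIII, G = SO*(2n), a case of R⁺ = 0: if x is nonzero, increasing,
x_n = 0, x_i + x_j ≤ 0 for i < j, and s is the smallest index with x_s = 0,
then 2 ≤ s ≤ n and #{(i,j) : i < j, x_i + x_j < 0} = (s−1)(2n−s)/2. -/
theorem stmt7 (n : ℕ) (hn : 4 ≤ n) (x : ℕ → ℝ)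
    (hx : ∃ j ∈ Finset.Icc 1 n, x j ≠ 0)
    (hmono : ∀ i j, 1 ≤ i → i ≤ j → j ≤ n → x i ≤ x j)
    (hxn : x n = 0)
    (hneg : ∀ i j, 1 ≤ i → i < j → j ≤ n → x i + x j ≤ 0)
    (s : ℕ) (hs : 1 ≤ s) (hsn : s ≤ n) (hxs : x s = 0)
    (hmin : ∀ j, 1 ≤ j → j < s → x j ≠ 0) :
    2 ≤ s ∧ s ≤ n ∧
    ((Finset.Icc 1 n ×ˢ Finset.Icc 1 n).filter
        (fun p => p.1 < p.2 ∧ x p.1 + x p.2 < 0)).card = (s-1) * (2*n - s) / 2 := by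
  -- everything ≥ s is zero
  have hzero : ∀ j, s ≤ j → j ≤ n → x j = 0 := by
    intro j hsj hjn
    rcases eq_or_lt_of_le hsj with rfl | hlt
    · exact hxs
    · have h1 := hneg s j hs hlt hjn
      have h2 := hmono s j hs (le_of_lt hlt) hjn
      linarith [hxs ▸ h2]
  have hnegv : ∀ i, 1 ≤ i → i < s → x i < 0 := by
    intro i hi his
    have h1 := hmono i s hi (le_of_lt his) hsn
    have h2 := hmin i hi his
    rcases lt_or_eq_of_le (hxs ▸ h1) with h | h
    · exact h
    · exact absurd h h2
  have hs2 : 2 ≤ s := by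
    by_contra h
    have hs1 : s = 1 := by omega
    obtain ⟨j, hj, hjne⟩ := hx
    simp only [Finset.mem_Icc] at hj
    exact hjne (hzero j (by omega) hj.2)
  refine ⟨hs2, hsn, ?_⟩
  have hset : ((Finset.Icc 1 n ×ˢ Finset.Icc 1 n).filter
        (fun p => p.1 < p.2 ∧ x p.1 + x p.2 < 0)) =
      ((Finset.Icc 1 n ×ˢ Finset.Icc 1 n).filter
        (fun p => p.1 < p.2 ∧ p.1 < s)) := by
    apply Finset.filter_congr
    rintro ⟨i, j⟩ hp
    simp only [Finset.mem_product, Finset.mem_Icc] at hp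
    obtain ⟨⟨hi1, hin⟩, hj1, hjn⟩ := hp
    simp only
    constructor
    · rintro ⟨hij, hxij⟩
      refine ⟨hij, ?_⟩
      by_contra h
      have hxi := hzero i (by omega) hin
      have hxj := hzero j (by omega) hjn
      linarith
    · rintro ⟨hij, his⟩
      refine ⟨hij, ?_⟩
      have h1 := hnegv i hi1 his
      have h2 : x j ≤ 0 := by
        rcases lt_or_ge j s with h | h
        · exact le_of_lt (hnegv j hj1 h)
        · exact le_of_eq (hzero j h hjn)
      linarith
  rw [hset]
  have hcard : ((Finset.Icc 1 n ×ˢ Finset.Icc 1 n).filter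
        (fun p => p.1 < p.2 ∧ p.1 < s)).card = ∑ i ∈ Finset.Icc 1 (s-1), (n - i) := by
    rw [Finset.card_eq_sum_card_fiberwise (f := Prod.fst) (t := Finset.Icc 1 (s-1))
      (by rintro ⟨i, j⟩ hp
          simp only [Finset.coe_filter, Set.mem_setOf_eq, Finset.mem_coe, Finset.mem_filter, Finset.mem_product, Finset.mem_Icc] at hp ⊢
          omega)]
    apply Finset.sum_congr rfl
    intro i hi
    simp only [Finset.mem_Icc] at hi
    have : ((Finset.Icc 1 n ×ˢ Finset.Icc 1 n).filter
        (fun p => p.1 < p.2 ∧ p.1 < s)).filter (fun p => p.1 = i) =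
        {i} ×ˢ Finset.Icc (i+1) n := by
      ext ⟨a, b⟩
      simp only [Finset.mem_filter, Finset.mem_product, Finset.mem_Icc, Finset.mem_singleton]
      constructor
      · rintro ⟨⟨⟨h1, h2⟩, h3⟩, h4⟩; omega
      · rintro ⟨rfl, h1, h2⟩; omega
    rw [this, Finset.card_product, Finset.card_singleton, Nat.card_Icc]
    omega
  rw [hcard]
  have h2 := stmt7_aux n (s-1) (by omega)
  have heq : (s-1) * (2*n - (s-1) - 1) = (s-1) * (2*n - s) := by
    congr 1; omega
  rw [heq] at h2
  omega
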